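/- If ω < κ ≤ 2^ω, then there is a coloring of the ordered pairs of distinct elements of κ (with countably many colors) admitting no monochromatic path of length 3: there are no three distinct α, β, γ < κ with c(α,β) = c(β,γ). Concretely, fixing an injection α ↦ b_α from κ into 2^ω, define the departure level m(α,β) as the least m with b_α(m) ≠ b_β(m), and color the ordered pair (α,β) by the pair (m(α,β), b_α(m(α,β))); this coloring has the stated property. -/

import Mathlib

open Cardinal

/-- If `ℵ₀ < κ ≤ 2^ℵ₀`, there is a coloring of the ordered pairs of distinct
ordinals below `κ` with countably many colors (colors are pairs `(m, b) : ℕ × Bool`,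
as in the departure-level coloring) admitting no monochromatic path of length 3:
there are no distinct `α, β, γ < κ` with `c α β = c β γ`. -/
theorem no_monochromatic_ordered_path (κ : Cardinal) (h1 : Cardinal.aleph0 < κ)
    (h2 : κ ≤ 2 ^ Cardinal.aleph0) :
    ∃ c : Ordinal → Ordinal → ℕ × Bool,
      ¬∃ α β γ : Ordinal, α < κ.ord ∧ β < κ.ord ∧ γ < κ.ord ∧
        α ≠ β ∧ β ≠ γ ∧ α ≠ γ ∧ c α β = c β γ := by
  classical
  have hmk : #(ULift.{_} (ℕ → Bool)) = 2 ^ Cardinal.aleph0 := by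
    simp [Cardinal.mk_arrow]
  have hle : #κ.ord.ToType ≤ #(ULift.{_} (ℕ → Bool)) := by
    rw [Cardinal.mk_toType, Cardinal.card_ord, hmk]; exact h2
  obtain ⟨e⟩ := Cardinal.le_def _ _ |>.mp hle
  -- g : Ordinal → (ℕ → Bool), injective on Iio κ.ord
  set g : Ordinal → ℕ → Bool := fun α =>
    if h : α < κ.ord then (e ((Ordinal.ToType.mk (o := κ.ord)) ⟨α, h⟩)).down
    else fun _ => false with hg
  have hginj : ∀ {α β : Ordinal}, α < κ.ord → β < κ.ord → α ≠ β → g α ≠ g β := by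
    intro α β hα hβ hne hgeq
    apply hne
    rw [hg] at hgeq
    simp only [dif_pos hα, dif_pos hβ] at hgeq
    have := e.injective (ULift.ext _ _ hgeq)
    have := (Ordinal.ToType.mk (o := κ.ord)).injective this
    exact congrArg Subtype.val this
  -- the coloring
  refine ⟨fun α β =>
    if h : g α ≠ g β then
      ((Nat.find (Function.ne_iff.mp h)), g α (Nat.find (Function.ne_iff.mp h)))
    else (0, false), ?_⟩
  rintro ⟨α, β, γ, hα, hβ, hγ, hab, hbc, hac, hcol⟩
  have h1 : g α ≠ g β := hginj hα hβ hab
  have h2 : g β ≠ g γ := hginj hβ hγ hbc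
  simp only [dif_pos h1, dif_pos h2] at hcol
  have hm : Nat.find (Function.ne_iff.mp h1) = Nat.find (Function.ne_iff.mp h2) :=
    congrArg Prod.fst hcol
  have hv : g α (Nat.find (Function.ne_iff.mp h1)) = g β (Nat.find (Function.ne_iff.mp h2)) :=
    congrArg Prod.snd hcol
  rw [← hm] at hv
  exact Nat.find_spec (Function.ne_iff.mp h1) hv
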